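/- For the fixed reduced word i = (1, 2,1, 3,2,1, ..., n-1,...,1) of the longest element of S_n, each column set K_i^{(r)} = s_{i₁}s_{i₂}···s_{i_r}({1,2,...,i_r}) is an interval of consecutive integers in {1,...,n}. -/

import Mathlib

/-- The simple transposition `s_j = (j, j+1)` acting on `ℕ ⊇ {1,…,n}`;
`s₀` is the identity. -/
def sRefl (j : ℕ) : Equiv.Perm ℕ := if j = 0 then 1 else Equiv.swap j (j + 1)

/-- The word `i = (1, 2,1, 3,2,1, …, n-1,…,1)`, listing the letters of
`(s₁)(s₂s₁)⋯(s_{n-1}⋯s₁)`. -/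
def theWord (n : ℕ) : List ℕ :=
  (List.range (n - 1)).flatMap (fun k => ((List.range (k + 1)).reverse.map (· + 1)))

/-- The column set `K^{(r)} = s_{i₁}s_{i₂}⋯s_{i_r}({1,…,i_r})` attached to the
`r`-th letter (0-indexed `r`) of a word `l`. -/
def colSet (l : List ℕ) (r : ℕ) : Finset ℕ :=
  (Finset.Icc 1 (l.getD r 0)).image (((l.take (r + 1)).map sRefl).prod : Equiv.Perm ℕ)

/-! Auxiliary definitions -/

/-- The `k`-th block `[k+1, k, …, 1]`. -/
def blockW (k : ℕ) : List ℕ := (List.range (k + 1)).reverse.map (· + 1)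

/-- Concatenation of blocks `0, …, K-1`. -/
def fullW (K : ℕ) : List ℕ := (List.range K).flatMap blockW

/-- Triangular numbers. -/
def tri : ℕ → ℕ
  | 0 => 0
  | k + 1 => tri k + (k + 1)

lemma theWord_eq (n : ℕ) : theWord n = fullW (n - 1) := rfl

lemma blockW_length (k : ℕ) : (blockW k).length = k + 1 := by
  simp [blockW]

lemma fullW_succ (K : ℕ) : fullW (K + 1) = fullW K ++ blockW K := by
  simp [fullW, List.range_succ]

lemma fullW_length (K : ℕ) : (fullW K).length = tri K := by
  induction K with
  | zero => rfl
  | succ K ih => rw [fullW_succ, List.length_append, ih, blockW_length, tri]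

lemma blockW_getElem (k t : ℕ) (ht : t ≤ k) : (blockW k).getD t 0 = k + 1 - t := by
  have h : t < (blockW k).length := by rw [blockW_length]; omega
  rw [List.getD_eq_getElem _ _ h]
  simp only [blockW, List.getElem_map, List.getElem_reverse, List.getElem_range]
  simp [List.length_range]
  omega

/-- `fullW K` decomposes past block `k`. -/
lemma fullW_decomp (K k : ℕ) (hk : k < K) :
    ∃ s, fullW K = fullW k ++ (blockW k ++ s) := by
  induction K with
  | zero => omega
  | succ K ih =>
    rcases Nat.lt_succ_iff_lt_or_eq.mp hk with h | h
    · obtain ⟨s, hs⟩ := ih h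
      exact ⟨s ++ blockW K, by rw [fullW_succ, hs]; simp⟩
    · exact ⟨[], by rw [fullW_succ, h]; simp⟩

lemma take_fullW (K k t : ℕ) (hk : k < K) (ht : t ≤ k) :
    (fullW K).take (tri k + t + 1) = fullW k ++ (blockW k).take (t + 1) := by
  obtain ⟨s, hs⟩ := fullW_decomp K k hk
  rw [hs, List.take_append, fullW_length]
  have h1 : tri k + t + 1 - tri k = t + 1 := by omega
  rw [h1, List.take_of_length_le (by rw [fullW_length]; omega),
    List.take_append]
  have h2 : t + 1 - (blockW k).length = 0 := by rw [blockW_length]; omega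
  rw [h2, List.take_zero, List.append_nil]

lemma getD_fullW (K k t : ℕ) (hk : k < K) (ht : t ≤ k) :
    (fullW K).getD (tri k + t) 0 = k + 1 - t := by
  obtain ⟨s, hs⟩ := fullW_decomp K k hk
  rw [hs]
  have h1 : (fullW k).length = tri k := fullW_length k
  have h2 : t < (blockW k ++ s).length := by simp [blockW_length]; omega
  have h3 : tri k + t < (fullW k ++ (blockW k ++ s)).length := by
    simp [h1, blockW_length]; omega
  rw [List.getD_eq_getElem _ _ h3, List.getElem_append_right (by omega)]
  have h4 : tri k + t - (fullW k).length = t := by omega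
  rw [List.getElem_append_left (by rw [blockW_length]; omega)]
  · rw [← List.getD_eq_getElem _ 0, h4, blockW_getElem k t ht]

/-- Explicit formula for the prefix permutation after block `k`, offset `t`
(assuming `t ≤ k`). -/
def fPerm (k t x : ℕ) : ℕ :=
  if x = 0 then 0
  else if x + t < k + 1 then k + 2 - x
  else if x + t = k + 1 then k + 2
  else if x ≤ k + 2 then k + 3 - x
  else x

/-- The word prefix up through block `k`, offset `t`. -/
def plist (k t : ℕ) : List ℕ := fullW k ++ (blockW k).take (t + 1)

/-- The associated prefix permutation. -/
def pPerm (k t : ℕ) : Equiv.Perm ℕ := ((plist k t).map sRefl).prod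

lemma blockW_take_succ (k t : ℕ) (ht : t < k) :
    (blockW k).take (t + 2) = (blockW k).take (t + 1) ++ [k - t] := by
  have h : t + 1 < (blockW k).length := by rw [blockW_length]; omega
  rw [List.take_succ, List.getElem?_eq_getElem h]
  simp only [blockW, List.getElem_map, List.getElem_reverse, List.getElem_range]
  simp [List.length_range]
  congr 1
  omega

lemma plist_succ (k t : ℕ) (ht : t < k) :
    plist k (t + 1) = plist k t ++ [k - t] := by
  rw [plist, plist, blockW_take_succ k t ht, List.append_assoc]

lemma blockW_succ (k : ℕ) : blockW (k + 1) = (k + 2) :: blockW k := by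
  rw [blockW, blockW, List.range_succ]
  simp

lemma plist_block_succ (k : ℕ) :
    plist (k + 1) 0 = plist k k ++ [k + 2] := by
  rw [plist, plist, fullW_succ, blockW_succ,
    List.take_of_length_le (l := blockW k) (by rw [blockW_length])]
  simp

lemma prod_append_single (l : List ℕ) (a : ℕ) :
    (((l ++ [a]).map sRefl).prod : Equiv.Perm ℕ) = (l.map sRefl).prod * sRefl a := by
  simp

lemma pPerm_zero : ⇑(pPerm 0 0) = fPerm 0 0 := by
  funext x
  have : pPerm 0 0 = sRefl 1 := by
    simp [pPerm, plist, fullW, blockW]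
  rw [this, sRefl]
  norm_num
  rw [Equiv.swap_apply_def]
  simp only [fPerm]
  split_ifs <;> omega

lemma pPerm_step (k t : ℕ) (ht : t < k) (ih : ⇑(pPerm k t) = fPerm k t) :
    ⇑(pPerm k (t + 1)) = fPerm k (t + 1) := by
  funext x
  have h1 : pPerm k (t + 1) = pPerm k t * sRefl (k - t) := by
    rw [pPerm, plist_succ k t ht, prod_append_single]; rfl
  rw [h1, Equiv.Perm.mul_apply, ih]
  have hkt : k - t ≠ 0 := by omega
  rw [sRefl, if_neg hkt, Equiv.swap_apply_def]
  simp only [fPerm]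
  split_ifs <;> first | omega | exact absurd ‹False› not_false

lemma pPerm_block_step (k : ℕ) (ih : ⇑(pPerm k k) = fPerm k k) :
    ⇑(pPerm (k + 1) 0) = fPerm (k + 1) 0 := by
  funext x
  have h1 : pPerm (k + 1) 0 = pPerm k k * sRefl (k + 2) := by
    rw [pPerm, plist_block_succ, prod_append_single]; rfl
  rw [h1, Equiv.Perm.mul_apply, ih]
  rw [sRefl, if_neg (by omega), Equiv.swap_apply_def]
  simp only [fPerm]
  split_ifs <;> first | omega | exact absurd ‹False› not_false

lemma pPerm_eq : ∀ k t, t ≤ k → ⇑(pPerm k t) = fPerm k t := by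
  intro k
  induction k with
  | zero =>
    intro t ht
    interval_cases t
    exact pPerm_zero
  | succ k ihk =>
    intro t
    induction t with
    | zero => exact fun _ => pPerm_block_step k (ihk k le_rfl)
    | succ t iht =>
      exact fun ht => pPerm_step (k + 1) t (by omega) (iht (by omega))

lemma exists_decomp (K r : ℕ) (hr : r < tri K) :
    ∃ k t, k < K ∧ t ≤ k ∧ r = tri k + t := by
  induction K with
  | zero => exact absurd hr (by simp [tri])
  | succ K ih =>
    by_cases h : r < tri K
    · obtain ⟨k, t, h1, h2, h3⟩ := ih h
      exact ⟨k, t, by omega, h2, h3⟩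
    · refine ⟨K, r - tri K, by omega, ?_, by omega⟩
      have : tri (K + 1) = tri K + (K + 1) := rfl
      omega

lemma image_fPerm (k t : ℕ) (ht : t ≤ k) :
    (Finset.Icc 1 (k + 1 - t)).image (fPerm k t) = Finset.Icc (t + 2) (k + 2) := by
  ext y
  simp only [Finset.mem_image, Finset.mem_Icc]
  constructor
  · rintro ⟨x, ⟨hx1, hx2⟩, rfl⟩
    simp only [fPerm]
    split_ifs <;> omega
  · rintro ⟨hy1, hy2⟩
    by_cases hyk : y = k + 2
    · refine ⟨k + 1 - t, ⟨by omega, le_rfl⟩, ?_⟩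
      simp only [fPerm]
      split_ifs <;> omega
    · refine ⟨k + 2 - y, ⟨by omega, by omega⟩, ?_⟩
      simp only [fPerm]
      split_ifs <;> omega

/-- For the fixed reduced word `i = (1, 2,1, …, n-1,…,1)` of the longest element
of `S_n`, each column set `K_i^{(r)}` is an interval of consecutive integers
inside `{1,…,n}`. -/
theorem colSet_is_interval (n : ℕ) (r : ℕ) (hr : r < (theWord n).length) :
    colSet (theWord n) r ⊆ Finset.Icc 1 n ∧
    ∃ a : ℕ, colSet (theWord n) r =
      Finset.Ico a (a + (colSet (theWord n) r).card) := by
  rw [theWord_eq] at hr ⊢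
  rw [fullW_length] at hr
  obtain ⟨k, t, hk, ht, rfl⟩ := exists_decomp (n - 1) r hr
  have hcol : colSet (fullW (n - 1)) (tri k + t) = Finset.Icc (t + 2) (k + 2) := by
    rw [colSet, getD_fullW (n - 1) k t hk ht, take_fullW (n - 1) k t hk ht]
    have hP : ((((fullW k ++ (blockW k).take (t + 1)).map sRefl).prod : Equiv.Perm ℕ) : ℕ → ℕ)
        = fPerm k t := pPerm_eq k t ht
    rw [hP, image_fPerm k t ht]
  rw [hcol]
  constructor
  · exact Finset.Icc_subset_Icc (by omega) (by omega)
  · refine ⟨t + 2, ?_⟩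
    rw [Nat.card_Icc]
    have h1 : t + 2 + (k + 2 + 1 - (t + 2)) = k + 3 := by omega
    rw [h1, show k + 3 = (k + 2) + 1 from rfl, Finset.Ico_add_one_right_eq_Icc]
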